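/- Let γ : ℝ → ℝ be continuous, 1-periodic, with γ(t) ≥ 0 for all t, let ε > 0 satisfy ε·sup_t γ(t) ≤ 1, let q : [0,1] → ℝ be continuous, and let φ : ℝ² → ℝ be C¹ on an open neighborhood of [0,1]². Then |∫₀¹ q(x₁)·(φ(x₁, εγ(x₁/ε)) − φ(x₁, 0)) dx₁| ≤ √ε · (∫₀¹ q(x₁)² γ(x₁/ε) dx₁)^{1/2} · (∫_{{x ∈ (0,1)² : 0 < x₂ < εγ(x₁/ε)}} (∂₂φ(x))² dx)^{1/2}. -/

import Mathlib

open MeasureTheory Set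

/-- second partial derivative of a function on `ℝ²` -/
noncomputable def pd2 (u : ℝ × ℝ → ℝ) (x : ℝ × ℝ) : ℝ := fderiv ℝ u x (0, 1)

lemma cs_integral {α : Type*} [MeasurableSpace α] {μ : Measure α} {f g : α → ℝ}
    (hf0 : 0 ≤ᵐ[μ] f) (hg0 : 0 ≤ᵐ[μ] g)
    (hfm : AEStronglyMeasurable f μ) (hgm : AEStronglyMeasurable g μ)
    (hf2 : Integrable (fun x => f x ^ 2) μ) (hg2 : Integrable (fun x => g x ^ 2) μ) :
    ∫ x, f x * g x ∂μ ≤ Real.sqrt (∫ x, f x ^ 2 ∂μ) * Real.sqrt (∫ x, g x ^ 2 ∂μ) := by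
  have hpq : (2:ℝ).HolderConjugate 2 := Real.HolderConjugate.two_two
  have h2 : ENNReal.ofReal (2:ℝ) = 2 := by norm_num
  have hf' : MemLp f (ENNReal.ofReal (2:ℝ)) μ := by
    rw [h2]; exact (memLp_two_iff_integrable_sq hfm).2 hf2
  have hg' : MemLp g (ENNReal.ofReal (2:ℝ)) μ := by
    rw [h2]; exact (memLp_two_iff_integrable_sq hgm).2 hg2
  have := integral_mul_le_Lp_mul_Lq_of_nonneg hpq hf0 hg0 hf' hg'
  have e : ∀ h : α → ℝ, (∫ x, h x ^ (2:ℝ) ∂μ) ^ (1/(2:ℝ)) = Real.sqrt (∫ x, h x ^ 2 ∂μ) := by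
    intro h
    rw [Real.sqrt_eq_rpow]
    norm_num [Real.rpow_natCast]
  rw [e f, e g] at this
  exact this

lemma sqrt_le_one_add (t : ℝ) (ht : 0 ≤ t) : Real.sqrt t ≤ 1 + t := by
  have h : t ≤ (1 + t) ^ 2 := by nlinarith
  have := Real.sqrt_le_sqrt h
  rwa [Real.sqrt_sq (by linarith)] at this

theorem boundary_difference_estimate
    (γ : ℝ → ℝ) (hγ : Continuous γ) (hper : ∀ t, γ (t + 1) = γ t)
    (hpos : ∀ t, 0 ≤ γ t)
    (ε : ℝ) (hε : 0 < ε) (hεγ : ∀ t, ε * γ t ≤ 1)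
    (q : ℝ → ℝ) (hq : ContinuousOn q (Set.Icc (0:ℝ) 1))
    (φ : ℝ × ℝ → ℝ) (U : Set (ℝ × ℝ)) (hU : IsOpen U)
    (hUc : Set.Icc (0:ℝ) 1 ×ˢ Set.Icc (0:ℝ) 1 ⊆ U)
    (hφ : ContDiffOn ℝ 1 φ U) :
    |∫ x₁ in (0:ℝ)..1, q x₁ * (φ (x₁, ε * γ (x₁ / ε)) - φ (x₁, 0))| ≤
      Real.sqrt ε * Real.sqrt (∫ x₁ in (0:ℝ)..1, (q x₁) ^ 2 * γ (x₁ / ε)) *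
        Real.sqrt (∫ x in {x : ℝ × ℝ | (0 < x.1 ∧ x.1 < 1) ∧
            (0 < x.2 ∧ x.2 < ε * γ (x.1 / ε))}, (pd2 φ x) ^ 2) := by
  set g : ℝ → ℝ := fun x₁ => ε * γ (x₁ / ε) with hg_def
  have hgc : Continuous g := continuous_const.mul (hγ.comp (continuous_id.div_const ε))
  have hg0 : ∀ x, 0 ≤ g x := fun x => mul_nonneg hε.le (hpos _)
  have hg1 : ∀ x, g x ≤ 1 := fun x => hεγ _
  set K : Set (ℝ × ℝ) := Set.Icc (0:ℝ) 1 ×ˢ Set.Icc (0:ℝ) 1 with hK_def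
  have hKcomp : IsCompact K := isCompact_Icc.prod isCompact_Icc
  -- continuity of pd2 φ on U
  have hpd2 : ContinuousOn (pd2 φ) U := by
    have h1 : ContinuousOn (fderiv ℝ φ) U := hφ.continuousOn_fderiv_of_isOpen hU le_rfl
    exact (ContinuousLinearMap.apply ℝ ℝ ((0:ℝ), (1:ℝ))).continuous.comp_continuousOn h1
  obtain ⟨M, hM⟩ := hKcomp.exists_bound_of_continuousOn (hpd2.mono hUc)
  -- the thin set S
  set S : Set (ℝ × ℝ) := {x : ℝ × ℝ | (0 < x.1 ∧ x.1 < 1) ∧ (0 < x.2 ∧ x.2 < ε * γ (x.1 / ε))}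
    with hS_def
  have hSopen : IsOpen S := by
    have : S = ({x : ℝ × ℝ | 0 < x.1} ∩ {x | x.1 < 1}) ∩
        ({x : ℝ × ℝ | 0 < x.2} ∩ {x | x.2 < g x.1}) := by
      ext x; simp [hS_def, hg_def, and_assoc]
    rw [this]
    exact (((isOpen_lt continuous_const continuous_fst).inter
      (isOpen_lt continuous_fst continuous_const)).inter
      ((isOpen_lt continuous_const continuous_snd).inter
      (isOpen_lt continuous_snd (hgc.comp continuous_fst))))
  have hSK : S ⊆ K := by
    rintro x ⟨⟨h1, h2⟩, h3, h4⟩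
    exact ⟨⟨h1.le, h2.le⟩, ⟨h3.le, h4.le.trans (hg1 x.1)⟩⟩
  -- integrability of (pd2 φ)² on S
  have hvol : volume S ≠ ⊤ :=
    ne_of_lt (lt_of_le_of_lt (measure_mono hSK) hKcomp.measure_lt_top)
  have hmeas : Measurable fun x => (pd2 φ x) ^ 2 :=
    (measurable_fderiv_apply_const ℝ φ ((0:ℝ), (1:ℝ))).pow_const 2
  have hi : IntegrableOn (fun x => (pd2 φ x) ^ 2) S volume := by
    refine Measure.integrableOn_of_bounded (M := M ^ 2) hvol hmeas.aestronglyMeasurable ?_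
    filter_upwards [ae_restrict_mem hSopen.measurableSet] with x hx
    calc ‖(pd2 φ x) ^ 2‖ = ‖pd2 φ x‖ ^ 2 := by rw [norm_pow]
      _ ≤ M ^ 2 := pow_le_pow_left₀ (norm_nonneg _) (hM x (hSK hx)) 2
  set F : ℝ × ℝ → ℝ := S.indicator (fun x => (pd2 φ x) ^ 2) with hF_def
  have hFint : Integrable F volume := hi.integrable_indicator hSopen.measurableSet
  have hF0 : ∀ x, 0 ≤ F x := fun x => Set.indicator_nonneg (fun y _ => sq_nonneg _) x
  set E : ℝ → ℝ := fun x₁ => ∫ t, F (x₁, t) with hE_def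
  have hFint' : Integrable F (volume.prod volume) := by
    rwa [← Measure.volume_eq_prod]
  have hEint : Integrable E volume := hFint'.integral_prod_left
  have hE0 : ∀ x₁, 0 ≤ E x₁ := fun x₁ => integral_nonneg fun t => hF0 _
  have hEeq : ∫ x₁, E x₁ = ∫ x, F x := by
    rw [Measure.volume_eq_prod]; exact (integral_prod _ hFint').symm
  -- slices
  have hslice : ∀ x₁ ∈ Set.Ioo (0:ℝ) 1,
      E x₁ = ∫ t in Set.Ioo 0 (g x₁), (pd2 φ (x₁, t)) ^ 2 := by
    intro x₁ hx₁
    have : ∀ t, F (x₁, t) = (Set.Ioo 0 (g x₁)).indicator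
        (fun t => (pd2 φ (x₁, t)) ^ 2) t := by
      intro t
      simp [hF_def, Set.indicator_apply, hS_def, Set.mem_Ioo, hx₁.1, hx₁.2, hg_def]
    simp only [hE_def, this]
    rw [integral_indicator measurableSet_Ioo]
  -- FTC + inner Cauchy–Schwarz
  have hmem : ∀ x₁ ∈ Set.Icc (0:ℝ) 1, ∀ t ∈ Set.Icc 0 (g x₁), ((x₁, t) : ℝ × ℝ) ∈ K := by
    intro x₁ hx₁ t ht
    exact ⟨hx₁, ⟨ht.1, ht.2.trans (hg1 x₁)⟩⟩
  have hcont_t : ∀ x₁ ∈ Set.Icc (0:ℝ) 1,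
      ContinuousOn (fun t => pd2 φ (x₁, t)) (Set.Icc 0 (g x₁)) := by
    intro x₁ hx₁
    exact (hpd2.mono hUc).comp
      ((continuous_const.prodMk continuous_id).continuousOn) (hmem x₁ hx₁)
  have hFTC : ∀ x₁ ∈ Set.Icc (0:ℝ) 1,
      φ (x₁, g x₁) - φ (x₁, 0) = ∫ t in (0:ℝ)..(g x₁), pd2 φ (x₁, t) := by
    intro x₁ hx₁
    symm
    refine intervalIntegral.integral_eq_sub_of_hasDerivAt (f := fun t => φ (x₁, t))
      (f' := fun t => pd2 φ (x₁, t)) (fun t ht => ?_) ?_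
    · rw [Set.uIcc_of_le (hg0 x₁)] at ht
      have hxU : ((x₁, t) : ℝ × ℝ) ∈ U := hUc (hmem x₁ hx₁ t ht)
      have hdiff : DifferentiableAt ℝ φ (x₁, t) :=
        ((hφ.differentiableOn one_ne_zero).differentiableAt (hU.mem_nhds hxU))
      have hcurve : HasDerivAt (fun s : ℝ => ((x₁, s) : ℝ × ℝ)) ((0:ℝ), (1:ℝ)) t := by
        simpa using ((hasDerivAt_const t x₁).prodMk (hasDerivAt_id t))
      exact hdiff.hasFDerivAt.comp_hasDerivAt t hcurve
    · rw [intervalIntegrable_iff_integrableOn_Icc_of_le (hg0 x₁)]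
      exact (hcont_t x₁ hx₁).integrableOn_Icc
  have hinner : ∀ x₁ ∈ Set.Ioo (0:ℝ) 1,
      |∫ t in (0:ℝ)..(g x₁), pd2 φ (x₁, t)| ≤ Real.sqrt (g x₁) * Real.sqrt (E x₁) := by
    intro x₁ hx₁
    have hx₁' : x₁ ∈ Set.Icc (0:ℝ) 1 := ⟨hx₁.1.le, hx₁.2.le⟩
    rw [intervalIntegral.integral_of_le (hg0 x₁)]
    have habs : |∫ t in Set.Ioc 0 (g x₁), pd2 φ (x₁, t)| ≤
        ∫ t in Set.Ioc 0 (g x₁), |pd2 φ (x₁, t)| := by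
      simpa [Real.norm_eq_abs] using
        norm_integral_le_integral_norm (μ := volume.restrict (Set.Ioc 0 (g x₁)))
          (f := fun t => pd2 φ (x₁, t))
    refine habs.trans ?_
    have hcs := cs_integral (μ := volume.restrict (Set.Ioc 0 (g x₁)))
      (f := fun _ => (1:ℝ)) (g := fun t => |pd2 φ (x₁, t)|)
      (Filter.Eventually.of_forall fun _ => zero_le_one)
      (Filter.Eventually.of_forall fun t => abs_nonneg _)
      aestronglyMeasurable_const
      (((hcont_t x₁ hx₁').mono Set.Ioc_subset_Icc_self).abs.aestronglyMeasurable
        measurableSet_Ioc)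
      (by
        have h1' : IntegrableOn (fun _ : ℝ => (1:ℝ) ^ 2) (Set.Ioc 0 (g x₁)) volume :=
          integrableOn_const measure_Ioc_lt_top.ne
        exact h1')
      (by
        simp only [sq_abs]
        exact (((hcont_t x₁ hx₁').pow 2).integrableOn_Icc).mono_set
          Set.Ioc_subset_Icc_self)
    simp only [one_mul, one_pow, sq_abs] at hcs
    have h1 : ∫ _ in Set.Ioc 0 (g x₁), (1:ℝ) = g x₁ := by
      rw [setIntegral_const, Real.volume_real_Ioc_of_le (hg0 x₁), smul_eq_mul, mul_one, sub_zero]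
    have h2 : ∫ t in Set.Ioc 0 (g x₁), (pd2 φ (x₁, t)) ^ 2 = E x₁ := by
      rw [integral_Ioc_eq_integral_Ioo, hslice x₁ hx₁]
    rw [h1, h2] at hcs
    exact hcs
  -- outer pointwise bound
  set A : ℝ → ℝ := fun x₁ => Real.sqrt (q x₁ ^ 2 * g x₁) with hA_def
  set B : ℝ → ℝ := fun x₁ => Real.sqrt (E x₁) with hB_def
  have hpt : ∀ x₁ ∈ Set.Ioo (0:ℝ) 1,
      |q x₁ * (φ (x₁, g x₁) - φ (x₁, 0))| ≤ A x₁ * B x₁ := by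
    intro x₁ hx₁
    have hx₁' : x₁ ∈ Set.Icc (0:ℝ) 1 := ⟨hx₁.1.le, hx₁.2.le⟩
    rw [abs_mul, hFTC x₁ hx₁']
    have hAeq : A x₁ = |q x₁| * Real.sqrt (g x₁) := by
      rw [hA_def]
      simp only
      rw [Real.sqrt_mul (sq_nonneg _), Real.sqrt_sq_eq_abs]
    rw [hAeq, mul_assoc]
    exact mul_le_mul_of_nonneg_left (hinner x₁ hx₁) (abs_nonneg _)
  -- measurability/integrability of A, B
  have hAcont : ContinuousOn A (Set.Icc (0:ℝ) 1) :=
    Real.continuous_sqrt.comp_continuousOn ((hq.pow 2).mul hgc.continuousOn)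
  obtain ⟨C, hC⟩ := isCompact_Icc.exists_bound_of_continuousOn hAcont
  have hA_sm : AEStronglyMeasurable A (volume.restrict (Set.Ioo (0:ℝ) 1)) :=
    (hAcont.mono Set.Ioo_subset_Icc_self).aestronglyMeasurable measurableSet_Ioo
  have hB_sm : AEStronglyMeasurable B (volume.restrict (Set.Ioo (0:ℝ) 1)) :=
    (Real.continuous_sqrt.comp_aestronglyMeasurable hEint.aestronglyMeasurable).restrict
  have hA2 : Integrable (fun x => A x ^ 2) (volume.restrict (Set.Ioo (0:ℝ) 1)) := by
    have : ∀ x, A x ^ 2 = q x ^ 2 * g x := by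
      intro x
      exact Real.sq_sqrt (mul_nonneg (sq_nonneg _) (hg0 x))
    simp only [this]
    exact (((hq.pow 2).mul hgc.continuousOn).integrableOn_Icc).mono_set
      Set.Ioo_subset_Icc_self
  have hB2 : Integrable (fun x => B x ^ 2) (volume.restrict (Set.Ioo (0:ℝ) 1)) := by
    have : ∀ x, B x ^ 2 = E x := fun x => Real.sq_sqrt (hE0 x)
    simp only [this]
    exact hEint.restrict
  have hAB_int : Integrable (fun x => A x * B x) (volume.restrict (Set.Ioo (0:ℝ) 1)) := by
    have h1' : IntegrableOn (fun _ : ℝ => (1:ℝ)) (Set.Ioo (0:ℝ) 1) volume :=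
      integrableOn_const measure_Ioo_lt_top.ne
    refine Integrable.mono' (g := fun x => C * (1 + E x))
      ((h1'.add hEint.restrict).const_mul C)
      (hA_sm.mul hB_sm) ?_
    filter_upwards [ae_restrict_mem measurableSet_Ioo] with x hx
    have hA0 : 0 ≤ A x := Real.sqrt_nonneg _
    have hB0 : 0 ≤ B x := Real.sqrt_nonneg _
    have hAC : A x ≤ C := by
      have := hC x (Set.Ioo_subset_Icc_self hx)
      rwa [Real.norm_eq_abs, abs_of_nonneg hA0] at this
    have hBE : B x ≤ 1 + E x := sqrt_le_one_add (E x) (hE0 x)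
    rw [Real.norm_eq_abs, abs_of_nonneg (mul_nonneg hA0 hB0)]
    exact mul_le_mul hAC hBE hB0 (le_trans hA0 hAC)
  -- Cauchy–Schwarz (outer)
  have hcsO : ∫ x in Set.Ioo (0:ℝ) 1, A x * B x ≤
      Real.sqrt (∫ x in Set.Ioo (0:ℝ) 1, A x ^ 2) *
      Real.sqrt (∫ x in Set.Ioo (0:ℝ) 1, B x ^ 2) :=
    cs_integral (Filter.Eventually.of_forall fun x => Real.sqrt_nonneg _)
      (Filter.Eventually.of_forall fun x => Real.sqrt_nonneg _)
      hA_sm hB_sm hA2 hB2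
  -- identify the two square integrals
  have hA2eq : ∫ x in Set.Ioo (0:ℝ) 1, A x ^ 2 =
      ε * ∫ x₁ in (0:ℝ)..1, (q x₁) ^ 2 * γ (x₁ / ε) := by
    rw [intervalIntegral.integral_of_le zero_le_one, integral_Ioc_eq_integral_Ioo,
      ← integral_const_mul]
    refine setIntegral_congr_fun measurableSet_Ioo fun x _ => ?_
    have : A x ^ 2 = q x ^ 2 * g x := Real.sq_sqrt (mul_nonneg (sq_nonneg _) (hg0 x))
    rw [this, hg_def]; ring
  have hB2eq : ∫ x in Set.Ioo (0:ℝ) 1, B x ^ 2 = ∫ x in S, (pd2 φ x) ^ 2 := by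
    have h1 : ∀ x, B x ^ 2 = E x := fun x => Real.sq_sqrt (hE0 x)
    simp only [h1]
    have h2 : ∫ x₁ in Set.Ioo (0:ℝ) 1, E x₁ = ∫ x₁, E x₁ := by
      refine setIntegral_eq_integral_of_forall_compl_eq_zero fun x hx => ?_
      have : ∀ t, F (x, t) = 0 := by
        intro t
        rw [hF_def, Set.indicator_apply_eq_zero]
        intro hmem'
        exact (hx (Set.mem_Ioo.2 ⟨hmem'.1.1, hmem'.1.2⟩)).elim
      simp [hE_def, this]
    rw [h2, hEeq, hF_def, integral_indicator hSopen.measurableSet]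
  -- assemble
  have hL : |∫ x₁ in (0:ℝ)..1, q x₁ * (φ (x₁, ε * γ (x₁ / ε)) - φ (x₁, 0))| ≤
      ∫ x in Set.Ioo (0:ℝ) 1, A x * B x := by
    rw [intervalIntegral.integral_of_le zero_le_one, integral_Ioc_eq_integral_Ioo]
    have habs : |∫ x in Set.Ioo (0:ℝ) 1, q x * (φ (x, ε * γ (x / ε)) - φ (x, 0))| ≤
        ∫ x in Set.Ioo (0:ℝ) 1, |q x * (φ (x, ε * γ (x / ε)) - φ (x, 0))| := by
      simpa only [Real.norm_eq_abs] using
        norm_integral_le_integral_norm (μ := volume.restrict (Set.Ioo (0:ℝ) 1))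
          (f := fun x => q x * (φ (x, ε * γ (x / ε)) - φ (x, 0)))
    refine habs.trans ?_
    refine integral_mono_of_nonneg
      (Filter.Eventually.of_forall fun x => abs_nonneg _) hAB_int ?_
    filter_upwards [ae_restrict_mem measurableSet_Ioo] with x hx
    exact hpt x hx
  calc |∫ x₁ in (0:ℝ)..1, q x₁ * (φ (x₁, ε * γ (x₁ / ε)) - φ (x₁, 0))|
      ≤ ∫ x in Set.Ioo (0:ℝ) 1, A x * B x := hL
    _ ≤ Real.sqrt (∫ x in Set.Ioo (0:ℝ) 1, A x ^ 2) *
        Real.sqrt (∫ x in Set.Ioo (0:ℝ) 1, B x ^ 2) := hcsO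
    _ = Real.sqrt ε * Real.sqrt (∫ x₁ in (0:ℝ)..1, (q x₁) ^ 2 * γ (x₁ / ε)) *
        Real.sqrt (∫ x in S, (pd2 φ x) ^ 2) := by
        rw [hA2eq, hB2eq, Real.sqrt_mul hε.le]
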